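/- Let A → B be a local homomorphism of local rings making B a flat A-algebra, and let M be an A-module. Then M is a free A-module of finite rank if and only if M ⊗_A B is a free B-module of finite rank. -/

import Mathlib

open TensorProduct in

private lemma aux_ff (A B : Type*) [CommRing A] [CommRing B] [IsLocalRing A] [IsLocalRing B]
    [Algebra A B] [IsLocalHom (algebraMap A B)] [Module.Flat A B] :
    Module.FaithfullyFlat A B := by
  refine { toFlat := inferInstance, submodule_ne_top := ?_ }
  intro m hm htop
  rw [IsLocalRing.eq_maximalIdeal hm] at htop
  have hle : (IsLocalRing.maximalIdeal A) • (⊤ : Submodule A B) ≤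
      (IsLocalRing.maximalIdeal B).restrictScalars A := by
    refine Submodule.smul_le.2 fun r hr b _ => ?_
    rw [Submodule.restrictScalars_mem, Algebra.smul_def]
    refine Ideal.mul_mem_right _ _ ?_
    rw [IsLocalRing.mem_maximalIdeal] at hr ⊢
    exact fun hu => hr (IsLocalHom.map_nonunit r hu)
  have h1 : (1 : B) ∈ IsLocalRing.maximalIdeal B := hle (by rw [htop]; trivial)
  exact (IsLocalRing.maximalIdeal.isMaximal B).ne_top (Ideal.eq_top_iff_one _ |>.2 h1)

open TensorProduct in

/-- Faithfully flat descent of injectivity. -/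
private lemma aux_inj_reflect {A B : Type*} [CommRing A] [CommRing B] [Algebra A B]
    [Module.FaithfullyFlat A B] {N N' : Type*} [AddCommGroup N] [Module A N]
    [AddCommGroup N'] [Module A N'] (f : N →ₗ[A] N')
    (h : Function.Injective (f.lTensor B)) : Function.Injective f := by
  have ex : Function.Exact ((0 : (PUnit : Type) →ₗ[A] N).lTensor B) (f.lTensor B) := by
    rw [LinearMap.exact_iff, LinearMap.lTensor_zero, LinearMap.range_zero, LinearMap.ker_eq_bot]
    exact h
  have h2 := Module.FaithfullyFlat.lTensor_reflects_exact A B _ _ ex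
  rw [← LinearMap.ker_eq_bot]
  rw [LinearMap.exact_iff] at h2
  rw [h2, LinearMap.range_zero]

open TensorProduct in

set_option synthInstance.maxHeartbeats 1000000 in
/-- Faithfully flat descent of flatness (for `B ⊗[A] M` flat over `A`). -/
private lemma aux_flat_descent {A B : Type*} [CommRing A] [CommRing B] [Algebra A B]
    [Module.FaithfullyFlat A B] {M : Type*} [AddCommGroup M] [Module A M]
    (hBM : Module.Flat A (B ⊗[A] M)) : Module.Flat A M := by
  rw [Module.Flat.iff_rTensor_injective']
  intro I
  apply aux_inj_reflect (B := B)
  have comm : ∀ x : B ⊗[A] (I ⊗[A] M),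
      (TensorProduct.leftComm A B A M) (((I.subtype.rTensor M).lTensor B) x) =
        (I.subtype.rTensor (B ⊗[A] M)) ((TensorProduct.leftComm A B I M) x) := by
    intro x
    induction x using TensorProduct.induction_on with
    | zero => simp only [map_zero]
    | tmul b y =>
        induction y using TensorProduct.induction_on with
        | zero => simp only [tmul_zero, map_zero]
        | tmul i m =>
            simp only [LinearMap.lTensor_tmul, LinearMap.rTensor_tmul,
              TensorProduct.leftComm_tmul, Submodule.coe_subtype]
        | add y z hy hz => simp only [tmul_add, map_add, hy, hz]
    | add x y hx hy => simp only [map_add, hx, hy]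
  have key : ⇑((I.subtype.rTensor M).lTensor B) =
      (TensorProduct.leftComm A B A M).symm ∘ (I.subtype.rTensor (B ⊗[A] M)) ∘
        (TensorProduct.leftComm A B I M) := by
    funext x
    exact (LinearEquiv.eq_symm_apply _).2 (comm x)
  rw [key]
  exact (TensorProduct.leftComm A B A M).symm.injective.comp
    (((Module.Flat.iff_rTensor_injective'.mp hBM I)).comp
      (TensorProduct.leftComm A B I M).injective)

open TensorProduct in

/-- Faithfully flat descent of module-finiteness. -/
private lemma aux_finite_descent {A B : Type*} [CommRing A] [CommRing B] [Algebra A B]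
    [Module.FaithfullyFlat A B] (N : Type*) [AddCommGroup N] [Module A N]
    [Module.Finite B (B ⊗[A] N)] : Module.Finite A N := by
  classical
  have key : ∀ x : B ⊗[A] N, ∃ S : Finset N,
      x ∈ Submodule.span B ((fun n => (1 : B) ⊗ₜ[A] n) '' ↑S) := by
    intro x
    induction x using TensorProduct.induction_on with
    | zero => exact ⟨∅, Submodule.zero_mem _⟩
    | tmul b n =>
        refine ⟨{n}, ?_⟩
        have hb : b ⊗ₜ[A] n = b • ((1 : B) ⊗ₜ[A] n) := by
          rw [TensorProduct.smul_tmul', smul_eq_mul, mul_one]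
        rw [hb]
        exact Submodule.smul_mem _ _ (Submodule.subset_span ⟨n, by simp, rfl⟩)
    | add x y hx hy =>
        obtain ⟨Sx, hSx⟩ := hx
        obtain ⟨Sy, hSy⟩ := hy
        exact ⟨Sx ∪ Sy, Submodule.add_mem _
          (Submodule.span_mono (Set.image_mono (by intro a ha; simp [ha])) hSx)
          (Submodule.span_mono (Set.image_mono (by intro a ha; simp [ha])) hSy)⟩
  obtain ⟨T, hT⟩ := Module.Finite.fg_top (R := B) (M := B ⊗[A] N)
  choose S hS using key
  set S' : Finset N := T.biUnion S with hS'
  have hsub : ∀ x ∈ T, x ∈ Submodule.span B ((fun n => (1 : B) ⊗ₜ[A] n) '' (↑S' : Set N)) := by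
    intro x hx
    refine Submodule.span_mono (Set.image_mono ?_) (hS x)
    intro n hn
    exact Finset.mem_coe.2 (Finset.mem_biUnion.2 ⟨x, hx, Finset.mem_coe.1 hn⟩)
  have hspan : Submodule.span B ((fun n => (1 : B) ⊗ₜ[A] n) '' (↑S' : Set N)) = ⊤ := by
    rw [eq_top_iff, ← hT, Submodule.span_le]
    exact hsub
  set P := Submodule.span A (↑S' : Set N) with hP
  have hsurj : Function.Surjective (P.mkQ.baseChange B) := by
    intro y
    induction y using TensorProduct.induction_on with
    | zero => exact ⟨0, map_zero _⟩
    | tmul b q =>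
        obtain ⟨n, rfl⟩ := P.mkQ_surjective q
        exact ⟨b ⊗ₜ[A] n, by simp⟩
    | add x y hx hy =>
        obtain ⟨x', rfl⟩ := hx
        obtain ⟨y', rfl⟩ := hy
        exact ⟨x' + y', map_add _ _ _⟩
  have hker : ∀ x, P.mkQ.baseChange B x = 0 := by
    intro x
    have hx : x ∈ Submodule.span B ((fun n => (1 : B) ⊗ₜ[A] n) '' (↑S' : Set N)) := hspan ▸ Submodule.mem_top
    have hle : Submodule.span B ((fun n => (1 : B) ⊗ₜ[A] n) '' (↑S' : Set N)) ≤
        LinearMap.ker (P.mkQ.baseChange B) := by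
      rw [Submodule.span_le]
      rintro _ ⟨n, hn, rfl⟩
      have hn0 : P.mkQ n = 0 := by
        rw [Submodule.mkQ_apply, Submodule.Quotient.mk_eq_zero]
        exact Submodule.subset_span hn
      simp [LinearMap.mem_ker, hn0]
    exact LinearMap.mem_ker.1 (hle hx)
  have h1 : Subsingleton (B ⊗[A] (N ⧸ P)) := by
    refine subsingleton_iff_forall_eq 0 |>.2 fun y => ?_
    obtain ⟨x, rfl⟩ := hsurj y
    exact hker x
  have h2 : Subsingleton (N ⧸ P) := Module.FaithfullyFlat.lTensor_reflects_triviality A B _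
  have h3 : P = ⊤ := Submodule.Quotient.subsingleton_iff.1 h2
  exact ⟨⟨S', h3⟩⟩

open TensorProduct in
/-- Let `A → B` be a local homomorphism of local rings making `B` a flat
`A`-algebra, and let `M` be an `A`-module.  Then `M` is a free `A`-module of finite rank if and
only if `M ⊗_A B` is a free `B`-module of finite rank. -/
theorem stmt_0 (A B : Type*) [CommRing A] [CommRing B] [IsLocalRing A] [IsLocalRing B]
    [Algebra A B] [IsLocalHom (algebraMap A B)] [Module.Flat A B]
    (M : Type*) [AddCommGroup M] [Module A M] :
    (Module.Finite A M ∧ Module.Free A M) ↔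
      (Module.Finite B (TensorProduct A B M) ∧ Module.Free B (TensorProduct A B M)) := by
  constructor
  · rintro ⟨hfin, hfree⟩
    exact ⟨inferInstance, inferInstance⟩
  · rintro ⟨hfin, hfree⟩
    haveI := aux_ff A B
    haveI hMfin : Module.Finite A M := aux_finite_descent (B := B) M
    haveI hMflat : Module.Flat A M :=
      aux_flat_descent (B := B) (Module.Flat.trans A B (B ⊗[A] M))
    obtain ⟨n, f, hf⟩ := Module.Finite.exists_fin' A M
    haveI fpBM : Module.FinitePresentation B (B ⊗[A] M) :=
      Module.finitePresentation_of_projective B _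
    have hexact : Function.Exact ((LinearMap.ker f).subtype.baseChange B) (f.baseChange B) :=
      lTensor_exact B f.exact_subtype_ker_map hf
    have hsurj : Function.Surjective (f.baseChange B) := LinearMap.lTensor_surjective B hf
    have hfg : (LinearMap.ker (f.baseChange B)).FG :=
      Module.FinitePresentation.fg_ker _ hsurj
    have hinj : Function.Injective ((LinearMap.ker f).subtype.baseChange B) := by
      rw [LinearMap.baseChange_eq_ltensor]
      exact Module.Flat.lTensor_preserves_injective_linearMap _ (Submodule.injective_subtype _)
    have hrange : LinearMap.range ((LinearMap.ker f).subtype.baseChange B) =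
        LinearMap.ker (f.baseChange B) := (LinearMap.exact_iff.1 hexact).symm
    haveI : Module.Finite B ↥(LinearMap.ker (f.baseChange B)) :=
      ⟨(Submodule.fg_top _).2 hfg⟩
    let e : (B ⊗[A] ↥(LinearMap.ker f)) ≃ₗ[B] ↥(LinearMap.ker (f.baseChange B)) :=
      (LinearEquiv.ofInjective ((LinearMap.ker f).subtype.baseChange B) hinj).trans
        (LinearEquiv.ofEq _ _ hrange)
    haveI : Module.Finite B (B ⊗[A] ↥(LinearMap.ker f)) := Module.Finite.equiv e.symm
    haveI : Module.Finite A ↥(LinearMap.ker f) := aux_finite_descent (B := B) _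
    haveI : Module.FinitePresentation A M :=
      Module.finitePresentation_of_surjective f hf ((Submodule.fg_top _).1 Module.Finite.fg_top)
    exact ⟨hMfin, Module.free_of_flat_of_isLocalRing⟩
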